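/- arXiv:1804.05264 — 2 statements merged into one kernel-verified Lean document; each statement's English description precedes it below -/
import Mathlib

section
/- Let V and V' be realizations of M, let W and W' be normal matrices for V and V' respectively, and let S = Vᵀ * W and S' = V'ᵀ * W' be the corresponding slack matrices. Then V and V' are projectively equivalent if and only if there exist an invertible diagonal matrix D_n : Matrix (Fin n) (Fin n) k and an invertible diagonal matrix D_h : Matrix (Fin h) (Fin h) k such that S' = D_n * S * D_h. -/
open Classical Matrix MvPolynomial

/-- `V` is a realization of the matroid `M`: a set `I` is independent in `M` iff the
columns of `V` indexed by `I` are linearly independent over `k`. -/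
def IsRealization {k : Type*} [Field k] {n d : ℕ} (M : Matroid (Fin n))
    (V : Matrix (Fin (d + 1)) (Fin n) k) : Prop :=
  ∀ I : Set (Fin n), M.Indep I ↔ LinearIndependent k (fun i : I => Vᵀ (i : Fin n))

/-- `F` is a hyperplane of `M`: a flat of `M` of rank `d`. -/
def IsHyperplane {n : ℕ} (M : Matroid (Fin n)) (d : ℕ) (F : Set (Fin n)) : Prop :=
  M.IsFlat F ∧ ∃ I, M.IsBasis I F ∧ I.ncard = d

/-- `H` is a bijection onto the set of hyperplanes of `M`. -/
def HypEnum {n h : ℕ} (M : Matroid (Fin n)) (d : ℕ) (H : Fin h → Set (Fin n)) : Prop :=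
  Function.Injective H ∧ ∀ F : Set (Fin n), (∃ j, H j = F) ↔ IsHyperplane M d F

/-- `M` has rank `r` : some base of `M` has cardinality `r`. -/
def HasRank {n : ℕ} (M : Matroid (Fin n)) (r : ℕ) : Prop :=
  ∃ B, M.IsBase B ∧ B.ncard = r

/-- `W` is a normal matrix for the realization `V`: the dot product of column `j` of `W`
with column `i` of `V` is zero iff `i ∈ H j`. -/
def IsNormalMatrix {k : Type*} [Field k] {n d h : ℕ} (H : Fin h → Set (Fin n))
    (V : Matrix (Fin (d + 1)) (Fin n) k) (W : Matrix (Fin (d + 1)) (Fin h) k) : Prop :=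
  ∀ i j, (∑ r : Fin (d + 1), W r j * V r i) = 0 ↔ i ∈ H j

/-- Projective equivalence of realizations. -/
def ProjEquiv {k : Type*} [Field k] {n d : ℕ}
    (V V' : Matrix (Fin (d + 1)) (Fin n) k) : Prop :=
  ∃ (A : Matrix (Fin (d + 1)) (Fin (d + 1)) k) (b : Fin n → kˣ),
    IsUnit A ∧ V' = A * V * Matrix.diagonal (fun i => (b i : k))

/-- The index type of slack variables: pairs `(i, j)` with `i ∉ H j`. -/
abbrev SlackVar {n h : ℕ} (H : Fin h → Set (Fin n)) : Type :=
  {p : Fin n × Fin h // p.1 ∉ H p.2}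

/-- The symbolic slack matrix of `M`. -/
noncomputable def symbSlack {n h : ℕ} (H : Fin h → Set (Fin n)) (k : Type*) [Field k] :
    Matrix (Fin n) (Fin h) (MvPolynomial (SlackVar H) k) :=
  fun i j => if hij : i ∈ H j then 0 else X ⟨(i, j), hij⟩

/-- The ideal `J` generated by the `(d+2)`-minors of the symbolic slack matrix. -/
noncomputable def minorIdeal {n h : ℕ} (d : ℕ) (H : Fin h → Set (Fin n)) (k : Type*)
    [Field k] : Ideal (MvPolynomial (SlackVar H) k) :=
  Ideal.span { f | ∃ (r : Fin (d + 2) → Fin n) (c : Fin (d + 2) → Fin h),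
    Function.Injective r ∧ Function.Injective c ∧
      f = ((symbSlack H k).submatrix r c).det }

/-- The product `P` of all slack variables. -/
noncomputable def allVarsProd {n h : ℕ} (H : Fin h → Set (Fin n)) (k : Type*) [Field k] :
    MvPolynomial (SlackVar H) k :=
  ∏ e : SlackVar H, X e

/-- The slack ideal `I_M` : the saturation of `J` at `P`, as a set. -/
noncomputable def slackSet {n h : ℕ} (d : ℕ) (H : Fin h → Set (Fin n)) (k : Type*) [Field k] :
    Set (MvPolynomial (SlackVar H) k) :=
  {f | ∃ N : ℕ, allVarsProd H k ^ N * f ∈ minorIdeal d H k}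

/-- The matrix `S(s)` obtained by evaluating the symbolic slack matrix at `s`. -/
noncomputable def slackEval {k : Type*} [Field k] {n h : ℕ} (H : Fin h → Set (Fin n))
    (s : SlackVar H → k) : Matrix (Fin n) (Fin h) k :=
  fun i j => if hij : i ∈ H j then 0 else s ⟨(i, j), hij⟩

/-- Cyclic successor in `Fin m`. -/
def cycSucc {m : ℕ} (i : Fin m) : Fin m := ⟨(i.val + 1) % m, Nat.mod_lt _ i.pos⟩

/-- The cycle ideal `C_S` of a slack matrix `S`. -/
noncomputable def cycleIdeal {k : Type*} [Field k] {n h : ℕ} (H : Fin h → Set (Fin n))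
    (S : Matrix (Fin n) (Fin h) k) : Ideal (MvPolynomial (SlackVar H) k) :=
  Ideal.span { f | ∃ (m : ℕ) (_ : 2 ≤ m) (a : Fin m → Fin n) (b : Fin m → Fin h)
    (_ : Function.Injective a) (_ : Function.Injective b)
    (h1 : ∀ i, a i ∉ H (b i)) (h2 : ∀ i, a (cycSucc i) ∉ H (b i)),
    f = C (∏ i, S (a (cycSucc i)) (b i)) * ∏ i, X ⟨(a i, b i), h1 i⟩
      - C (∏ i, S (a i) (b i)) * ∏ i, X ⟨(a (cycSucc i), b i), h2 i⟩ }


section AuxStmt4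

variable {k : Type*} [Field k] {n d h : ℕ}

/-- The closure of any set in a matroid is a flat. -/
lemma aux4_flat_closure {α : Type*} (M : Matroid α) (X : Set α) : M.IsFlat (M.closure X) := by
  rw [Matroid.closure_def]
  haveI : Nonempty {F // M.IsFlat F ∧ X ∩ M.E ⊆ F} :=
    ⟨⟨M.E, M.ground_isFlat, Set.inter_subset_right⟩⟩
  have hiI := Matroid.IsFlat.iInter (M := M)
    (Fs := fun F : {F // M.IsFlat F ∧ X ∩ M.E ⊆ F} => F.1) (fun F => F.2.1)
  convert hiI using 1
  rw [Set.sInter_eq_iInter]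
  rfl

/-- A vector orthogonal to the columns of an independent set of size `d+1` is zero. -/
lemma aux4_orth_zero {M : Matroid (Fin n)}
    {V : Matrix (Fin (d + 1)) (Fin n) k} (hV : IsRealization M V)
    {J : Set (Fin n)} (hJ : M.Indep J) (hcard : J.ncard = d + 1)
    (u : Fin (d + 1) → k) (hu : ∀ i ∈ J, (∑ r, u r * V r i) = 0) : u = 0 := by
  have li : LinearIndependent k (fun i : J => Vᵀ (i : Fin n)) := (hV J).mp hJ
  haveI : Fintype J := (Set.toFinite J).fintype
  have hcard' : Fintype.card J = d + 1 := by
    rw [← Nat.card_eq_fintype_card, Nat.card_coe_set_eq, hcard]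
  haveI : Nonempty J := Fintype.card_pos_iff.mp (by omega)
  have hspan : Submodule.span k (Set.range fun i : J => Vᵀ (i : Fin n)) = ⊤ :=
    li.span_eq_top_of_card_eq_finrank (by simp [hcard'])
  have hdot : ∀ v : Fin (d + 1) → k, u ⬝ᵥ v = 0 := by
    intro v
    have hv : v ∈ Submodule.span k (Set.range fun i : J => Vᵀ (i : Fin n)) := by
      rw [hspan]; trivial
    induction hv using Submodule.span_induction with
    | mem x hx =>
        obtain ⟨i, rfl⟩ := hx
        simpa [dotProduct, Matrix.transpose] using hu i i.2
    | zero => simp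
    | add x y _ _ hx hy => simp [dotProduct_add, hx, hy]
    | smul a x _ hx => simp [dotProduct_smul, hx]
  funext r
  simpa using hdot (Pi.single r 1)

/-- Each hyperplane contains an independent set of size `d` which can be completed
by a point outside the hyperplane. -/
lemma aux4_hyp_struct {M : Matroid (Fin n)} (hE : M.E = Set.univ)
    (hrk : HasRank M (d + 1)) {H : Fin h → Set (Fin n)} (hH : HypEnum M d H) (j : Fin h) :
    ∃ (I : Set (Fin n)) (i₀ : Fin n), I ⊆ H j ∧ i₀ ∉ H j ∧ i₀ ∉ I ∧
      M.Indep (insert i₀ I) ∧ (insert i₀ I).ncard = d + 1 := by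
  obtain ⟨hflat, I, hI, hIcard⟩ := (hH.2 (H j)).mp ⟨j, rfl⟩
  obtain ⟨B, hB, hBcard⟩ := hrk
  have hne : H j ≠ Set.univ := by
    intro hu
    have hbase : M.IsBase I := by
      rw [← Matroid.isBasis_ground_iff]
      rw [hu] at hI; rwa [hE]
    have h1 : I.ncard = B.ncard := hbase.ncard_eq_ncard_of_isBase hB
    omega
  obtain ⟨i₀, hi₀⟩ := Set.ne_univ_iff_exists_notMem _ |>.mp hne
  have hclI : M.closure I = H j := by
    rw [hI.closure_eq_closure, hflat.closure]
  have hi₀I : i₀ ∉ I := fun hmem => hi₀ (hI.subset hmem)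
  have hins : M.Indep (insert i₀ I) := by
    rw [hI.indep.insert_indep_iff_of_notMem hi₀I, hclI, hE]
    exact ⟨trivial, hi₀⟩
  exact ⟨I, i₀, hI.subset, hi₀, hi₀I, hins,
    by rw [Set.ncard_insert_of_notMem hi₀I (Set.toFinite I), hIcard]⟩

/-- Two normal vectors for the same hyperplane `F` are proportional by a unit. -/
lemma aux4_prop {M : Matroid (Fin n)} {V : Matrix (Fin (d + 1)) (Fin n) k}
    (hV : IsRealization M V)
    {F : Set (Fin n)} {I : Set (Fin n)} {i₀ : Fin n}
    (hIF : I ⊆ F) (hi₀ : i₀ ∉ F) (hi₀I : i₀ ∉ I)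
    (hins : M.Indep (insert i₀ I)) (hcard : (insert i₀ I).ncard = d + 1)
    (w w₂ : Fin (d + 1) → k)
    (hw : ∀ i, (∑ r, w r * V r i) = 0 ↔ i ∈ F)
    (hw₂ : ∀ i, (∑ r, w₂ r * V r i) = 0 ↔ i ∈ F) :
    ∃ c : kˣ, ∀ r, w₂ r = (c : k) * w r := by
  set α := ∑ r, w r * V r i₀ with hα
  set β := ∑ r, w₂ r * V r i₀ with hβ
  have hα0 : α ≠ 0 := fun h0 => hi₀ ((hw i₀).mp h0)
  have hβ0 : β ≠ 0 := fun h0 => hi₀ ((hw₂ i₀).mp h0)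
  set c := β * α⁻¹ with hc
  have hc0 : c ≠ 0 := mul_ne_zero hβ0 (inv_ne_zero hα0)
  have hzero : (fun r => w₂ r - c * w r) = 0 := by
    apply aux4_orth_zero hV hins hcard
    intro i hi
    rcases hi with rfl | hiI
    · have heq : ∑ r, (w₂ r - c * w r) * V r i = β - c * α := by
        simp [sub_mul, Finset.sum_sub_distrib, Finset.mul_sum, mul_assoc, hβ, hα]
      rw [heq, hc, mul_assoc, inv_mul_cancel₀ hα0, mul_one, sub_self]
    · have heq : ∑ r, (w₂ r - c * w r) * V r i =
          (∑ r, w₂ r * V r i) - c * (∑ r, w r * V r i) := by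
        simp [sub_mul, Finset.sum_sub_distrib, Finset.mul_sum, mul_assoc]
      rw [heq, (hw i).mpr (hIF hiI), (hw₂ i).mpr (hIF hiI), mul_zero, sub_zero]
  refine ⟨Units.mk0 c hc0, fun r => ?_⟩
  have hr := congrFun hzero r
  simp only [Pi.zero_apply] at hr
  simpa [sub_eq_zero] using hr

/-- Fundamental hyperplanes associated to a base. -/
lemma aux4_fund {M : Matroid (Fin n)} (hE : M.E = Set.univ)
    (hrk : HasRank M (d + 1)) {H : Fin h → Set (Fin n)} (hH : HypEnum M d H) :
    ∃ (e : Fin (d + 1) → Fin n) (jf : Fin (d + 1) → Fin h),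
      (∀ r, e r ∉ H (jf r)) ∧ (∀ r s, r ≠ s → e r ∈ H (jf s)) := by
  obtain ⟨B, hB, hBcard⟩ := hrk
  have hBfin : B.Finite := Set.toFinite B
  haveI : Fintype B := hBfin.fintype
  have hcard' : Fintype.card B = d + 1 := by
    rw [← Nat.card_eq_fintype_card, Nat.card_coe_set_eq, hBcard]
  have eqv : B ≃ Fin (d + 1) := Fintype.equivFinOfCardEq hcard'
  set e : Fin (d + 1) → Fin n := fun r => (eqv.symm r : B) with he
  have hemem : ∀ r, e r ∈ B := fun r => (eqv.symm r).2
  have heinj : Function.Injective e :=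
    Subtype.val_injective.comp eqv.symm.injective
  have hhyp : ∀ s, IsHyperplane M d (M.closure (B \ {e s})) := by
    intro s
    refine ⟨aux4_flat_closure M _, B \ {e s},
      (hB.indep.subset Set.diff_subset).isBasis_closure, ?_⟩
    rw [Set.ncard_diff_singleton_of_mem (hemem s), hBcard]
    omega
  have hjf : ∀ s, ∃ j, H j = M.closure (B \ {e s}) :=
    fun s => (hH.2 _).mpr (hhyp s)
  choose jf hjfe using hjf
  refine ⟨e, jf, fun r => ?_, fun r s hrs => ?_⟩
  · rw [hjfe]
    exact hB.indep.notMem_closure_diff_of_mem (hemem r)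
  · rw [hjfe]
    exact M.subset_closure _ (by rw [hE]; exact Set.subset_univ _)
      ⟨hemem r, fun hmem => hrs (heinj (by simpa using hmem))⟩

end AuxStmt4

/-- two realizations are projectively equivalent iff their slack matrices
differ by invertible row and column scalings. -/
theorem stmt4 {k : Type*} [Field k] {n d h : ℕ} (M : Matroid (Fin n))
    (hE : M.E = Set.univ) (hrk : HasRank M (d + 1))
    (H : Fin h → Set (Fin n)) (hH : HypEnum M d H)
    (V V' : Matrix (Fin (d + 1)) (Fin n) k)
    (hV : IsRealization M V) (hV' : IsRealization M V')
    (W W' : Matrix (Fin (d + 1)) (Fin h) k)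
    (hW : IsNormalMatrix H V W) (hW' : IsNormalMatrix H V' W') :
    ProjEquiv V V' ↔
      ∃ (dn : Fin n → kˣ) (dh : Fin h → kˣ),
        V'ᵀ * W' = Matrix.diagonal (fun i => (dn i : k)) * (Vᵀ * W) *
          Matrix.diagonal (fun j => (dh j : k)) := by
  constructor
  · -- Forward: projective equivalence gives scaled slack matrices
    rintro ⟨A, b, hA, hVeq⟩
    -- `w₂ j` is the `j`-th column of `Aᵀ * W'`
    set w₂ : Fin h → Fin (d + 1) → k := fun j r => ∑ s, A s r * W' s j with hw₂def
    have key : ∀ i j, (∑ s, V' s i * W' s j) = (b i : k) * ∑ r, w₂ j r * V r i := by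
      intro i j
      have hAV : ∀ s, V' s i = (∑ r, A s r * V r i) * (b i : k) := by
        intro s
        rw [hVeq, Matrix.mul_diagonal, Matrix.mul_apply]
      calc (∑ s, V' s i * W' s j)
          = ∑ s, ((∑ r, A s r * V r i) * (b i : k)) * W' s j := by
            exact Finset.sum_congr rfl fun s _ => by rw [hAV]
        _ = (b i : k) * ∑ s, ∑ r, (A s r * W' s j) * V r i := by
            rw [Finset.mul_sum]
            refine Finset.sum_congr rfl fun s _ => ?_
            simp only [Finset.sum_mul, Finset.mul_sum]
            exact Finset.sum_congr rfl fun r _ => by ring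
        _ = (b i : k) * ∑ r, w₂ j r * V r i := by
            rw [Finset.sum_comm]
            congr 1
            exact Finset.sum_congr rfl fun r _ => by
              rw [hw₂def]; rw [Finset.sum_mul]
    have hnorm2 : ∀ j i, (∑ r, w₂ j r * V r i) = 0 ↔ i ∈ H j := by
      intro j i
      have hb : (b i : k) ≠ 0 := (b i).ne_zero
      constructor
      · intro h0
        have : (∑ s, W' s j * V' s i) = 0 := by
          have := key i j
          rw [h0, mul_zero] at this
          rw [← this]
          exact Finset.sum_congr rfl fun s _ => mul_comm _ _
        exact (hW' i j).mp this
      · intro hmem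
        have h0 : (∑ s, V' s i * W' s j) = 0 := by
          rw [show (∑ s, V' s i * W' s j) = ∑ s, W' s j * V' s i from
            Finset.sum_congr rfl fun s _ => mul_comm _ _]
          exact (hW' i j).mpr hmem
        have := key i j
        rw [h0] at this
        exact (mul_eq_zero.mp this.symm).resolve_left hb
    have hprop : ∀ j, ∃ c : kˣ, ∀ r, w₂ j r = (c : k) * W r j := by
      intro j
      obtain ⟨I, i₀, hIF, hi₀, hi₀I, hins, hcard⟩ := aux4_hyp_struct hE hrk hH j
      exact aux4_prop hV hIF hi₀ hi₀I hins hcard _ _ (fun i => hW i j) (hnorm2 j)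
    choose c hc using hprop
    refine ⟨b, c, ?_⟩
    ext i j
    have lhs : (V'ᵀ * W') i j = ∑ s, V' s i * W' s j := by
      simp [Matrix.mul_apply, Matrix.transpose]
    rw [lhs, key i j]
    have : (∑ r, w₂ j r * V r i) = (c j : k) * ∑ r, W r j * V r i := by
      rw [Finset.mul_sum]
      exact Finset.sum_congr rfl fun r _ => by rw [hc j r]; ring
    rw [this]
    have hsum : (∑ r, W r j * V r i) = ∑ t, Vᵀ i t * W t j :=
      Finset.sum_congr rfl fun r _ => by simp [Matrix.transpose_apply, mul_comm]
    rw [Matrix.mul_diagonal, Matrix.diagonal_mul, Matrix.mul_apply, ← hsum]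
    ring
  · -- Backward: scaled slack matrices give projective equivalence
    rintro ⟨dn, dh, hS⟩
    obtain ⟨e, jf, hdiag, hoff⟩ := aux4_fund hE hrk hH
    set G : Matrix (Fin (d + 1)) (Fin (d + 1)) k := Matrix.of fun t s => W t (jf s) with hG
    set G' : Matrix (Fin (d + 1)) (Fin (d + 1)) k := Matrix.of fun t s => W' t (jf s) with hG'
    set VB : Matrix (Fin (d + 1)) (Fin (d + 1)) k := Matrix.of fun t r => V t (e r) with hVB
    set VB' : Matrix (Fin (d + 1)) (Fin (d + 1)) k := Matrix.of fun t r => V' t (e r) with hVB'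
    -- `VBᵀ * G` is a diagonal matrix with nonzero entries, hence `G` is invertible
    have hdiagmat : ∀ (Vx : Matrix (Fin (d + 1)) (Fin n) k)
        (Wx : Matrix (Fin (d + 1)) (Fin h) k), IsNormalMatrix H Vx Wx →
        ∃ g : Fin (d + 1) → k, (∀ r, g r ≠ 0) ∧
          (Matrix.of fun t r => Vx t (e r))ᵀ * (Matrix.of fun t s => Wx t (jf s)) =
            Matrix.diagonal g := by
      intro Vx Wx hWx
      refine ⟨fun r => ∑ t, Vx t (e r) * Wx t (jf r), fun r h0 => ?_, ?_⟩
      · have : (∑ t, Wx t (jf r) * Vx t (e r)) = 0 := by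
          rw [← h0]; exact Finset.sum_congr rfl fun t _ => mul_comm _ _
        exact hdiag r ((hWx (e r) (jf r)).mp this)
      · ext r s
        by_cases hrs : r = s
        · subst hrs
          simp [Matrix.mul_apply, Matrix.diagonal_apply_eq]
        · rw [Matrix.diagonal_apply_ne _ hrs]
          have hmem : e r ∈ H (jf s) := hoff r s hrs
          have : (∑ t, Wx t (jf s) * Vx t (e r)) = 0 := (hWx (e r) (jf s)).mpr hmem
          simp only [Matrix.mul_apply, Matrix.transpose_apply, Matrix.of_apply]
          rw [← this]
          exact Finset.sum_congr rfl fun t _ => mul_comm _ _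
    obtain ⟨g, hg0, hGdiag⟩ := hdiagmat V W hW
    obtain ⟨g', hg0', hGdiag'⟩ := hdiagmat V' W' hW'
    have hdetG : G.det ≠ 0 := by
      intro h0
      have : (VBᵀ * G).det = 0 := by rw [Matrix.det_mul, h0, mul_zero]
      rw [hGdiag, Matrix.det_diagonal] at this
      exact (Finset.prod_ne_zero_iff.mpr fun r _ => hg0 r) this
    have hdetG' : G'.det ≠ 0 := by
      intro h0
      have : (VB'ᵀ * G').det = 0 := by rw [Matrix.det_mul, h0, mul_zero]
      rw [hGdiag', Matrix.det_diagonal] at this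
      exact (Finset.prod_ne_zero_iff.mpr fun r _ => hg0' r) this
    set Dn : Matrix (Fin n) (Fin n) k := Matrix.diagonal (fun i => (dn i : k)) with hDn
    set Dt : Matrix (Fin (d + 1)) (Fin (d + 1)) k :=
      Matrix.diagonal (fun s => (dh (jf s) : k)) with hDt
    -- restricted slack relation
    have hrel : V'ᵀ * G' = Dn * (Vᵀ * G) * Dt := by
      ext i s
      have l1 : (V'ᵀ * G') i s = (V'ᵀ * W') i (jf s) := by
        simp [Matrix.mul_apply, hG']
      have l2 : (Vᵀ * G) i s = (Vᵀ * W) i (jf s) := by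
        simp [Matrix.mul_apply, hG]
      rw [l1, hS]
      simp only [hDn, hDt, Matrix.mul_diagonal, Matrix.diagonal_mul, l2]
    have hstep : V'ᵀ = Dn * (Vᵀ * G) * Dt * G'⁻¹ := by
      rw [← hrel, Matrix.mul_nonsing_inv_cancel_right _ _ (isUnit_iff_ne_zero.mpr hdetG')]
    refine ⟨(G'ᵀ)⁻¹ * (Dt * Gᵀ), dn, ?_, ?_⟩
    · rw [Matrix.isUnit_iff_isUnit_det, Matrix.det_mul, Matrix.det_mul,
        Matrix.det_nonsing_inv, Matrix.det_transpose, Matrix.det_transpose, hDt,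
        Matrix.det_diagonal, Ring.inverse_eq_inv]
      exact isUnit_iff_ne_zero.mpr (mul_ne_zero (inv_ne_zero hdetG')
        (mul_ne_zero (Finset.prod_ne_zero_iff.mpr fun s _ => (dh (jf s)).ne_zero) hdetG))
    · have : V' = (V'ᵀ)ᵀ := (Matrix.transpose_transpose _).symm
      rw [this, hstep]
      rw [Matrix.transpose_mul, Matrix.transpose_mul, Matrix.transpose_mul,
        Matrix.transpose_mul, Matrix.transpose_nonsing_inv,
        Matrix.transpose_transpose, hDn, hDt, Matrix.diagonal_transpose,
        Matrix.diagonal_transpose]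
      simp only [Matrix.mul_assoc]
end

section
/- M has a realization over k if and only if there exists s : E → k with s e ≠ 0 for every e ∈ E such that MvPolynomial.eval s f = 0 for every f ∈ I_M. -/
open Classical Matrix MvPolynomial

section AuxEval
variable {k : Type*} [Field k] {n d h : ℕ} {H : Fin h → Set (Fin n)}

lemma slackEval_eq_zero_iff (s : SlackVar H → k) (hs : ∀ e, s e ≠ 0) (i : Fin n) (j : Fin h) :
    slackEval H s i j = 0 ↔ i ∈ H j := by
  unfold slackEval
  split_ifs with hij
  · simp [hij]
  · exact iff_of_false (hs _) hij

lemma eval_minor (s : SlackVar H → k) (r : Fin (d+2) → Fin n) (c : Fin (d+2) → Fin h) :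
    eval s (((symbSlack H k).submatrix r c).det) = ((slackEval H s).submatrix r c).det := by
  have hm : (eval s).mapMatrix ((symbSlack H k).submatrix r c)
      = (slackEval H s).submatrix r c := by
    ext i j
    simp only [RingHom.mapMatrix_apply, Matrix.map_apply, Matrix.submatrix_apply,
      symbSlack, slackEval]
    split_ifs with hij <;> simp
  rw [RingHom.map_det, hm]

lemma minors_vanish {s : SlackVar H → k}
    (hvan : ∀ f ∈ slackSet d H k, eval s f = 0)
    (r : Fin (d+2) → Fin n) (c : Fin (d+2) → Fin h)
    (hr : Function.Injective r) (hc : Function.Injective c) :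
    ((slackEval H s).submatrix r c).det = 0 := by
  rw [← eval_minor]
  apply hvan
  have : (((symbSlack H k).submatrix r c).det) ∈ slackSet d H k := by
    simp only [slackSet, Set.mem_setOf_eq]
    have hg : ((symbSlack H k).submatrix r c).det ∈ minorIdeal d H k := by
      apply Ideal.subset_span
      show ∃ _, _
      exact ⟨r, c, hr, hc, rfl⟩
    exact ⟨0, by simpa using hg⟩
  exact this

lemma torus_vanish {s : SlackVar H → k} (hs : ∀ e, s e ≠ 0)
    (hmin : ∀ (r : Fin (d+2) → Fin n) (c : Fin (d+2) → Fin h),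
      Function.Injective r → Function.Injective c → ((slackEval H s).submatrix r c).det = 0) :
    ∀ f ∈ slackSet d H k, eval s f = 0 := by
  have hJ : minorIdeal d H k ≤ RingHom.ker (eval (R := k) s) := by
    rw [minorIdeal, Ideal.span_le]
    rintro g ⟨r, c, hr, hc, rfl⟩
    simp only [SetLike.mem_coe, RingHom.mem_ker]
    rw [eval_minor]
    exact hmin r c hr hc
  intro f hf
  simp only [slackSet, Set.mem_setOf_eq] at hf
  obtain ⟨N, hN⟩ := hf
  have h0 : eval s (allVarsProd H k ^ N * f) = 0 := hJ hN
  rw [_root_.map_mul, map_pow] at h0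
  have hP : eval s (allVarsProd H k) ≠ 0 := by
    rw [allVarsProd, map_prod]
    simp only [eval_X]
    exact Finset.prod_ne_zero_iff.2 fun e _ => hs e
  rcases mul_eq_zero.1 h0 with h | h
  · exact absurd h (pow_ne_zero _ hP)
  · exact h

end AuxEval
section MatroidAux
variable {n d : ℕ} {M : Matroid (Fin n)}

lemma base_ncard (hE : M.E = Set.univ) (hrk : HasRank M (d + 1)) {B : Set (Fin n)}
    (hB : M.IsBase B) : B.ncard = d + 1 := by
  obtain ⟨B₀, hB₀, hc⟩ := hrk
  have h1 : B.encard = B₀.encard := hB.encard_eq_encard_of_isBase hB₀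
  rw [Set.ncard_def, h1, ← Set.ncard_def, hc]

lemma flat_closure (M : Matroid (Fin n)) (X : Set (Fin n)) : M.IsFlat (M.closure X) := by
  refine ⟨fun I X' hI hIX' => ?_, M.closure_subset_ground X⟩
  have h1 := hIX'.subset_closure
  rwa [hI.closure_eq_closure, Matroid.closure_closure] at h1

lemma hyp_of_base (hE : M.E = Set.univ) {B : Set (Fin n)} (hB : M.IsBase B) {b : Fin n}
    (hb : b ∈ B) (hc : B.ncard = d + 1) :
    IsHyperplane M d (M.closure (B \ {b})) := by
  have hI : M.Indep (B \ {b}) := hB.indep.subset Set.diff_subset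
  refine ⟨flat_closure M _, B \ {b}, hI.isBasis_closure, ?_⟩
  rw [Set.ncard_diff_singleton_of_mem hb, hc]
  omega

end MatroidAux

lemma base_package {k : Type*} [Field k] {n d h : ℕ} {M : Matroid (Fin n)}
    (hE : M.E = Set.univ) (hrk : HasRank M (d + 1))
    {H : Fin h → Set (Fin n)} (hH : HypEnum M d H)
    (S : Matrix (Fin n) (Fin h) k)
    (hsupp : ∀ i j, S i j = 0 ↔ i ∈ H j)
    (hmin : ∀ (r : Fin (d + 2) → Fin n) (c : Fin (d + 2) → Fin h),
      Function.Injective r → Function.Injective c → (S.submatrix r c).det = 0)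
    {B : Set (Fin n)} (hB : M.IsBase B) :
    ∃ (β : Fin (d + 1) → Fin n) (coeff : Fin n → Fin (d + 1) → k),
      Function.Injective β ∧ Set.range β = B ∧
      LinearIndependent k (fun t => S (β t)) ∧
      (∀ e c, S e c = ∑ t, coeff e t * S (β t) c) ∧
      (∀ e t, e ∈ M.closure (B \ {β t}) → coeff e t = 0) := by
  classical
  -- enumeration of B
  have hBfin : B.Finite := B.toFinite
  have hcard : B.ncard = d + 1 := base_ncard hE hrk hB
  haveI : Fintype B := hBfin.fintype
  have hcard'' : Fintype.card B = d + 1 := by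
    rw [← Nat.card_eq_fintype_card, Nat.card_coe_set_eq, hcard]
  let eB : Fin (d + 1) ≃ B := (Fintype.equivFinOfCardEq hcard'').symm
  set β : Fin (d + 1) → Fin n := fun t => (eB t : Fin n) with hβ
  have hβinj : Function.Injective β := Subtype.val_injective.comp eB.injective
  have hβmem : ∀ t, β t ∈ B := fun t => (eB t).2
  have hβrange : Set.range β = B := by
    ext x
    constructor
    · rintro ⟨t, rfl⟩; exact hβmem t
    · intro hx; exact ⟨eB.symm ⟨x, hx⟩, by simp [hβ]⟩
  -- hyperplane indices
  have hγex : ∀ t, ∃ j, H j = M.closure (B \ {β t}) :=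
    fun t => (hH.2 _).2 (hyp_of_base hE hB (hβmem t) hcard)
  choose γ hγ using hγex
  have hsub : ∀ t, B \ {β t} ⊆ M.closure (B \ {β t}) := fun t =>
    M.subset_closure _ (by rw [hE]; exact Set.subset_univ _)
  have hQ0 : ∀ t u, t ≠ u → S (β t) (γ u) = 0 := by
    intro t u htu
    rw [hsupp, hγ]
    exact hsub u ⟨hβmem t, by simp [hβinj.ne htu]⟩
  have hQd : ∀ t, S (β t) (γ t) ≠ 0 := by
    intro t
    rw [Ne, hsupp, hγ]
    exact hB.indep.notMem_closure_diff_of_mem (hβmem t)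
  have hcl0 : ∀ e t, e ∈ M.closure (B \ {β t}) → S e (γ t) = 0 := by
    intro e t he
    rw [hsupp, hγ]
    exact he
  -- the square matrix Q
  set Q : Matrix (Fin (d + 1)) (Fin (d + 1)) k := Matrix.of (fun t u => S (β t) (γ u))
    with hQdef
  have hQdiag : Q = Matrix.diagonal (fun t => S (β t) (γ t)) := by
    ext t u
    by_cases htu : t = u
    · subst htu; simp [hQdef]
    · rw [Matrix.diagonal_apply_ne _ htu]; exact hQ0 t u htu
  have hQdet : Q.det ≠ 0 := by
    rw [hQdiag, Matrix.det_diagonal]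
    exact Finset.prod_ne_zero_iff.2 fun t _ => hQd t
  have hQinv' : Q⁻¹ * Q = 1 := Matrix.nonsing_inv_mul Q (Ne.isUnit hQdet)
  have hQinv : Q * Q⁻¹ = 1 := Matrix.mul_nonsing_inv Q (Ne.isUnit hQdet)
  have hγinj : Function.Injective γ := by
    intro u u' huu'
    by_contra hne
    exact hQd u (by rw [huu']; exact hQ0 u u' hne)
  -- coefficients
  set coeff : Fin n → Fin (d + 1) → k :=
    fun e => Matrix.vecMul (fun u => S e (γ u)) Q⁻¹ with hcoeff
  -- key identity
  have KI : ∀ e c, S e c = ∑ t, coeff e t * S (β t) c := by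
    intro e c
    by_cases heB : e ∈ B
    · rw [← hβrange] at heB
      obtain ⟨t₀, rfl⟩ := heB
      have h1 : coeff (β t₀) = fun t => (1 : Matrix (Fin (d + 1)) (Fin (d + 1)) k) t₀ t := by
        funext t
        have h2 : coeff (β t₀) t = (Q * Q⁻¹) t₀ t := by
          simp [hcoeff, Matrix.vecMul, Matrix.mul_apply, dotProduct, hQdef]
        rw [h2, hQinv]
      rw [h1]
      simp [Matrix.one_apply, ite_mul]
    · by_cases hcγ : ∃ u, γ u = c
      · obtain ⟨u₀, rfl⟩ := hcγ
        have h1 : ∑ t, coeff e t * S (β t) (γ u₀) = Matrix.vecMul (coeff e) Q u₀ := by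
          simp [Matrix.vecMul, dotProduct, hQdef]
        rw [h1, hcoeff, Matrix.vecMul_vecMul, hQinv', Matrix.vecMul_one]
      · push_neg at hcγ
        set r' : Fin (d + 1) ⊕ Fin 1 → Fin n := Sum.elim β (fun _ => e) with hr'def
        set c' : Fin (d + 1) ⊕ Fin 1 → Fin h := Sum.elim γ (fun _ => c) with hc'def
        have hβe : ∀ a, β a ≠ e := fun a hae => heB (hae ▸ hβmem a)
        have hr' : Function.Injective r' := by
          rintro (a | a) (b | b) hab
          · exact congrArg Sum.inl (hβinj hab)
          · exact absurd hab (hβe a)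
          · exact absurd hab.symm (hβe b)
          · exact congrArg Sum.inr (Subsingleton.elim a b)
        have hc' : Function.Injective c' := by
          rintro (a | a) (b | b) hab
          · exact congrArg Sum.inl (hγinj hab)
          · exact absurd hab (hcγ a)
          · exact absurd hab.symm (hcγ b)
          · exact congrArg Sum.inr (Subsingleton.elim a b)
        have hdet1 : (S.submatrix r' c').det = 0 := by
          rw [← Matrix.det_submatrix_equiv_self finSumFinEquiv.symm (S.submatrix r' c'),
            Matrix.submatrix_submatrix]
          exact hmin _ _ (hr'.comp finSumFinEquiv.symm.injective)
            (hc'.comp finSumFinEquiv.symm.injective)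
        have hblocks : S.submatrix r' c' =
            Matrix.fromBlocks Q (Matrix.of fun t (_ : Fin 1) => S (β t) c)
              (Matrix.of fun (_ : Fin 1) u => S e (γ u))
              (Matrix.of fun (_ : Fin 1) (_ : Fin 1) => S e c) := by
          ext (a | a) (b | b) <;> rfl
        haveI : Invertible Q := Q.invertibleOfIsUnitDet (Ne.isUnit hQdet)
        rw [hblocks, Matrix.det_fromBlocks₁₁] at hdet1
        have h1 : ((Matrix.of fun (_ : Fin 1) (_ : Fin 1) => S e c) -
            (Matrix.of fun (_ : Fin 1) u => S e (γ u)) * ⅟Q *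
              (Matrix.of fun t (_ : Fin 1) => S (β t) c)).det = 0 := by
          rcases mul_eq_zero.1 hdet1 with hzz | hzz
          · exact absurd hzz hQdet
          · exact hzz
        rw [Matrix.det_fin_one, Matrix.sub_apply, sub_eq_zero,
          Matrix.invOf_eq_nonsing_inv] at h1
        rw [show (Matrix.of fun (_ : Fin 1) (_ : Fin 1) => S e c) 0 0 = S e c from rfl] at h1
        rw [h1]
        simp [Matrix.mul_apply, hcoeff, Matrix.vecMul, dotProduct, hQdef,
          Finset.sum_mul]
  -- linear independence of rows of S indexed by B
  have hli : LinearIndependent k (fun t => S (β t)) := by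
    have hrowsQ : LinearIndependent k (fun t => Q t) :=
      Matrix.linearIndependent_rows_iff_isUnit.2 ((Matrix.isUnit_iff_isUnit_det Q).2
        (Ne.isUnit hQdet))
    apply LinearIndependent.of_comp (LinearMap.funLeft k k γ)
    have : (LinearMap.funLeft k k γ) ∘ (fun t => S (β t)) = fun t => Q t := by
      funext t
      rfl
    rw [this]
    exact hrowsQ
  -- vanishing of coefficients
  have hcoeff0 : ∀ e t, e ∈ M.closure (B \ {β t}) → coeff e t = 0 := by
    intro e t he
    have h1 : S e (γ t) = 0 := hcl0 e t he
    have h2 := KI e (γ t)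
    rw [h1] at h2
    have h3 : ∑ u, coeff e u * S (β u) (γ t) = coeff e t * S (β t) (γ t) := by
      apply Finset.sum_eq_single
      · intro u _ hu
        rw [hQ0 u t hu, mul_zero]
      · intro hu
        exact absurd (Finset.mem_univ t) hu
    rw [h3] at h2
    rcases mul_eq_zero.1 h2.symm with hz | hz
    · exact hz
    · exact absurd hz (hQd t)
  exact ⟨β, coeff, hβinj, hβrange, hli, KI, hcoeff0⟩
lemma realization_of_slack {k : Type*} [Field k] {n d h : ℕ} {M : Matroid (Fin n)}
    (hE : M.E = Set.univ) (hrk : HasRank M (d + 1))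
    {H : Fin h → Set (Fin n)} (hH : HypEnum M d H)
    (S : Matrix (Fin n) (Fin h) k)
    (hsupp : ∀ i j, S i j = 0 ↔ i ∈ H j)
    (hmin : ∀ (r : Fin (d + 2) → Fin n) (c : Fin (d + 2) → Fin h),
      Function.Injective r → Function.Injective c → (S.submatrix r c).det = 0) :
    ∃ V : Matrix (Fin (d + 1)) (Fin n) k, IsRealization M V := by
  classical
  have hrows : ∀ I : Set (Fin n), M.Indep I ↔
      LinearIndependent k (fun i : I => S (i : Fin n)) := by
    intro I
    constructor
    · intro hI
      obtain ⟨B', hB', hIB'⟩ := hI.exists_isBase_superset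
      obtain ⟨β, coeff, hβinj, hβrange, hli, KI, hc0⟩ :=
        base_package hE hrk hH S hsupp hmin hB'
      have hg : ∀ i : I, ∃ t, β t = (i : Fin n) := by
        intro i
        have : (i : Fin n) ∈ Set.range β := hβrange ▸ hIB' i.2
        exact this
      choose g hgspec using hg
      have hginj : Function.Injective g := fun i i' hii' =>
        Subtype.ext (by rw [← hgspec i, ← hgspec i', hii'])
      have hcmp : (fun i : I => S (i : Fin n)) = (fun t => S (β t)) ∘ g := by
        funext i
        simp [Function.comp, hgspec i]
      rw [hcmp]
      exact hli.comp g hginj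
    · intro hli
      by_contra hdep
      obtain ⟨J, hJ⟩ := M.exists_isBasis I (by rw [hE]; exact Set.subset_univ _)
      have hJI : J ⊆ I := hJ.subset
      have hJne : J ≠ I := fun hJI' => hdep (hJI' ▸ hJ.indep)
      obtain ⟨e, heI, heJ⟩ := Set.exists_of_ssubset (hJI.ssubset_of_ne hJne)
      have hecl : e ∈ M.closure J := hJ.subset_closure heI
      obtain ⟨B', hB', hJB'⟩ := hJ.indep.exists_isBase_superset
      obtain ⟨β, coeff, hβinj, hβrange, hli', KI, hc0⟩ :=
        base_package hE hrk hH S hsupp hmin hB'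
      have hα0 : ∀ t, β t ∉ J → coeff e t = 0 := by
        intro t ht
        apply hc0
        have hJsub : J ⊆ B' \ {β t} := by
          intro x hx
          refine ⟨hJB' hx, ?_⟩
          simp only [Set.mem_singleton_iff]
          rintro rfl
          exact ht hx
        exact M.closure_subset_closure hJsub hecl
      have hspan : S e ∈ Submodule.span k
          ((fun i : I => S (i : Fin n)) '' {x : I | (x : Fin n) ∈ J}) := by
        have h1 : S e = ∑ t, coeff e t • S (β t) := by
          funext c
          rw [KI e c, Finset.sum_apply]
          simp [smul_eq_mul]
        rw [h1]
        apply Submodule.sum_mem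
        intro t _
        by_cases htJ : β t ∈ J
        · exact Submodule.smul_mem _ _ (Submodule.subset_span ⟨⟨β t, hJI htJ⟩, htJ, rfl⟩)
        · rw [hα0 t htJ, zero_smul]
          exact Submodule.zero_mem _
      exact hli.notMem_span_image (s := {x : I | (x : Fin n) ∈ J}) (x := ⟨e, heI⟩) heJ hspan
  have hrk' := hrk
  obtain ⟨B, hB, _⟩ := hrk'
  obtain ⟨β, coeff, hβinj, hβrange, hli, KI, hc0⟩ := base_package hE hrk hH S hsupp hmin hB
  refine ⟨Matrix.of (fun t e => coeff e t), ?_⟩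
  intro I
  rw [hrows I]
  set Φ : (Fin (d + 1) → k) →ₗ[k] (Fin h → k) :=
    { toFun := fun x => ∑ t, x t • S (β t)
      map_add' := by
        intro x y
        simp [add_smul, Finset.sum_add_distrib]
      map_smul' := by
        intro c x
        simp [mul_smul, Finset.smul_sum] } with hΦdef
  have hΦ : ∀ x, Φ x = ∑ t, x t • S (β t) := fun x => rfl
  have hker : LinearMap.ker Φ = ⊥ := by
    rw [LinearMap.ker_eq_bot']
    intro x hx
    rw [hΦ] at hx
    funext t
    exact Fintype.linearIndependent_iff.1 hli x hx t
  have hcomp : (fun i : I => S (i : Fin n)) =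
      Φ ∘ (fun i : I => (Matrix.of (fun t e => coeff e t))ᵀ (i : Fin n)) := by
    funext i
    rw [Function.comp_apply, hΦ]
    funext c
    rw [Finset.sum_apply, KI (i : Fin n) c]
    simp [smul_eq_mul]
  rw [hcomp]
  exact Φ.linearIndependent_iff hker
lemma closure_span {k : Type*} [Field k] {n d : ℕ} {M : Matroid (Fin n)}
    {V : Matrix (Fin (d + 1)) (Fin n) k} (hV : IsRealization M V)
    {I : Set (Fin n)} (hI : M.Indep I) {x : Fin n} (hx : x ∈ M.closure I) :
    Vᵀ x ∈ Submodule.span k (Vᵀ '' I) := by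
  classical
  by_cases hxI : x ∈ I
  · exact Submodule.subset_span ⟨x, hxI, rfl⟩
  · have hdep : M.Dep (insert x I) := by
      rcases (hI.mem_closure_iff).1 hx with hd | hmem
      · exact hd
      · exact absurd hmem hxI
    have hnli : ¬ LinearIndependent k (fun i : ↥(insert x I) => Vᵀ (i : Fin n)) :=
      fun hli => hdep.not_indep ((hV _).2 hli)
    replace hnli : ¬ (LinearIndepOn k Vᵀ I ∧ Vᵀ x ∉ Submodule.span k (Vᵀ '' I)) := fun h => hnli ((linearIndepOn_insert (K := k) (f := Vᵀ) hxI).2 h)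
    push_neg at hnli
    exact hnli ((hV I).1 hI)

lemma slack_of_realization {k : Type*} [Field k] {n d h : ℕ} {M : Matroid (Fin n)}
    (hE : M.E = Set.univ) {H : Fin h → Set (Fin n)} (hH : HypEnum M d H)
    (V : Matrix (Fin (d + 1)) (Fin n) k) (hV : IsRealization M V) :
    ∃ S : Matrix (Fin n) (Fin h) k,
      (∀ i j, S i j = 0 ↔ i ∈ H j) ∧
      (∀ (r : Fin (d + 2) → Fin n) (c : Fin (d + 2) → Fin h),
        Function.Injective r → Function.Injective c → (S.submatrix r c).det = 0) := by
  classical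
  have hwex : ∀ j : Fin h, ∃ w : Fin (d + 1) → k,
      (∀ x, x ∈ H j → (∑ r, V r x * w r) = 0) ∧
      (∀ i, i ∉ H j → (∑ r, V r i * w r) ≠ 0) := by
    intro j
    obtain ⟨hflat, I₀, hbasis, hcard⟩ := (hH.2 (H j)).1 ⟨j, rfl⟩
    have hI₀ : M.Indep I₀ := hbasis.indep
    have hI₀sub : I₀ ⊆ H j := hbasis.subset
    have hclI₀ : M.closure I₀ = H j := by
      apply subset_antisymm
      · rw [← hflat.closure]
        exact M.closure_subset_closure hI₀sub
      · exact hbasis.subset_closure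
    have hli₀ : LinearIndependent k (fun i : I₀ => Vᵀ (i : Fin n)) := (hV I₀).1 hI₀
    set U' : Submodule k (Fin (d + 1) → k) := Submodule.span k (Vᵀ '' I₀) with hU'
    have hUlt : U' < ⊤ := by
      rw [lt_top_iff_ne_top]
      intro htop
      have h1 : Module.finrank k U' ≤ d := by
        haveI : Fintype (Vᵀ '' I₀) := Set.Finite.fintype ((Set.toFinite I₀).image _)
        refine le_trans (finrank_span_le_card _) ?_
        rw [← Set.ncard_eq_toFinset_card']
        calc (Vᵀ '' I₀).ncard ≤ I₀.ncard := Set.ncard_image_le (Set.toFinite _)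
        _ = d := hcard
      rw [htop] at h1
      rw [finrank_top, Module.finrank_fin_fun] at h1
      omega
    obtain ⟨φ, hφne, hφmap⟩ :=
      Submodule.exists_dual_map_eq_bot_of_lt_top hUlt inferInstance
    set w : Fin (d + 1) → k := fun r => φ (fun j' => if r = j' then 1 else 0) with hw
    have hφw : ∀ x : Fin (d + 1) → k, φ x = ∑ r, x r * w r := by
      intro x
      conv_lhs => rw [pi_eq_sum_univ x]
      rw [map_sum]
      refine Finset.sum_congr rfl fun r _ => ?_
      rw [φ.map_smul, smul_eq_mul]
    have hφ0 : ∀ x, x ∈ H j → φ (Vᵀ x) = 0 := by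
      intro x hx
      have hmem : Vᵀ x ∈ U' := by
        apply closure_span hV hI₀
        rw [hclI₀]
        exact hx
      have : φ (Vᵀ x) ∈ Submodule.map φ U' := Submodule.mem_map_of_mem hmem
      rwa [hφmap, Submodule.mem_bot] at this
    refine ⟨w, ?_, ?_⟩
    · intro x hx
      have := hφ0 x hx
      rwa [hφw] at this
    · intro i hi hzero
      -- i ∉ H j; suppose dot product is zero, derive φ = 0
      have hiI₀ : i ∉ I₀ := fun hmem => hi (hI₀sub hmem)
      have hins : M.Indep (insert i I₀) := by
        by_contra hni
        apply hi
        rw [← hclI₀]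
        exact (hI₀.mem_closure_iff).2 (Or.inl (Matroid.dep_iff.2
          ⟨hni, by rw [hE]; exact Set.subset_univ _⟩))
      have hlins : LinearIndependent k (fun x : ↥(insert i I₀) => Vᵀ (x : Fin n)) :=
        (hV _).1 hins
      haveI : Fintype ↥(insert i I₀) := Set.Finite.fintype (Set.toFinite _)
      have hcardins : Fintype.card ↥(insert i I₀) = d + 1 := by
        rw [← Nat.card_eq_fintype_card, Nat.card_coe_set_eq,
          Set.ncard_insert_of_notMem hiI₀ (Set.toFinite _), hcard]
      have hspan : Submodule.span k (Set.range (fun x : ↥(insert i I₀) => Vᵀ (x : Fin n)))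
          = ⊤ := by
        apply hlins.span_eq_top_of_card_eq_finrank
        rw [hcardins, Module.finrank_fin_fun]
      have hker : Submodule.span k
          (Set.range (fun x : ↥(insert i I₀) => Vᵀ (x : Fin n))) ≤ LinearMap.ker φ := by
        rw [Submodule.span_le]
        rintro y ⟨⟨x, hx⟩, rfl⟩
        rcases hx with rfl | hxI₀
        · simp only [SetLike.mem_coe, LinearMap.mem_ker]
          rw [hφw]
          exact hzero
        · simp only [SetLike.mem_coe, LinearMap.mem_ker]
          exact hφ0 _ (hI₀sub hxI₀)
      rw [hspan, top_le_iff] at hker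
      exact hφne (LinearMap.ker_eq_top.1 hker)
  choose w hw0 hwne using hwex
  refine ⟨Matrix.of (fun i j => ∑ r, V r i * w j r), ?_, ?_⟩
  · intro i j
    constructor
    · intro hz
      by_contra hij
      exact hwne j i hij hz
    · intro hij
      exact hw0 j i hij
  · intro r c hr hc
    by_contra hdet
    set A : Matrix (Fin (d + 2)) (Fin (d + 1)) k := Matrix.of (fun i t => Vᵀ (r i) t) with hA
    set Bm : Matrix (Fin (d + 1)) (Fin (d + 2)) k := Matrix.of (fun t j => w (c j) t) with hB
    have hfac : (Matrix.of (fun i j => ∑ r', V r' i * w j r')).submatrix r c = A * Bm := by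
      ext i j
      simp [Matrix.mul_apply, hA, hB, Matrix.submatrix_apply]
    have hrk1 : ((Matrix.of (fun i j => ∑ r', V r' i * w j r')).submatrix r c).rank = d + 2 := by
      rw [Matrix.rank_of_isUnit _ ((Matrix.isUnit_iff_isUnit_det _).2 (Ne.isUnit hdet))]
      simp
    have hrk2 : ((Matrix.of (fun i j => ∑ r', V r' i * w j r')).submatrix r c).rank ≤ d + 1 := by
      rw [hfac]
      exact le_trans (Matrix.rank_mul_le_left A Bm)
        (le_trans (Matrix.rank_le_card_width A) (by simp))
    omega
/-- `M` is realizable over `k` iff the slack variety has a torus point. -/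
theorem stmt8 {k : Type*} [Field k] {n d h : ℕ} (M : Matroid (Fin n))
    (hE : M.E = Set.univ) (hrk : HasRank M (d + 1))
    (H : Fin h → Set (Fin n)) (hH : HypEnum M d H) :
    (∃ V : Matrix (Fin (d + 1)) (Fin n) k, IsRealization M V) ↔
      ∃ s : SlackVar H → k, (∀ e, s e ≠ 0) ∧
        ∀ f ∈ slackSet d H k, MvPolynomial.eval s f = 0 := by
  constructor
  · rintro ⟨V, hV⟩
    obtain ⟨S, hsupp, hmin⟩ := slack_of_realization hE hH V hV
    have hsne : ∀ e : SlackVar H, (fun e : SlackVar H => S e.1.1 e.1.2) e ≠ 0 :=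
      fun e hz => e.2 ((hsupp _ _).1 hz)
    refine ⟨fun e => S e.1.1 e.1.2, hsne, ?_⟩
    have hSe : slackEval H (fun e : SlackVar H => S e.1.1 e.1.2) = S := by
      ext i j
      simp only [slackEval]
      split_ifs with hij
      · exact ((hsupp i j).2 hij).symm
      · rfl
    apply torus_vanish hsne
    intro r c hr hc
    rw [hSe]
    exact hmin r c hr hc
  · rintro ⟨s, hs, hvan⟩
    exact realization_of_slack hE hrk hH (slackEval H s)
      (slackEval_eq_zero_iff s hs) (fun r c hr hc => minors_vanish hvan r c hr hc)
end
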